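/- Let L be the clause gadget: a 3-cycle z1 z2 z3, a 14-cycle u1…u14, pendant vertices ℓ4, ℓ7, ℓ10, and edges z1u1, u4ℓ4, u7ℓ7, u10ℓ10. For every 2-edge-coloring c of L whose color-blind partition function c* is a proper vertex coloring of L, at least one of u4, u7, u10 has color-blind partition (2,1). -/

import Mathlib

open Finset

/-- The color-blind partition of `v`: the multiset of (nonzero) counts of incident
edges of each color, i.e. the partition of `deg v` with trailing zeroes removed. -/
def cbp {V : Type*} [Fintype V] [DecidableEq V] (G : SimpleGraph V) [DecidableRel G.Adj]
    {k : ℕ} (c : Sym2 V → Fin k) (v : V) : Multiset ℕ :=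
  (((Finset.univ : Finset (Fin k)).val.map fun i =>
    ((G.neighborFinset v).filter fun w => c s(v, w) = i).card).filter fun m => m ≠ 0)

/-- `c` is a color-blind distinguishing edge-coloring of `G`. -/
def IsCBD {V : Type*} [Fintype V] [DecidableEq V] (G : SimpleGraph V) [DecidableRel G.Adj]
    {k : ℕ} (c : Sym2 V → Fin k) : Prop :=
  ∀ u v : V, G.Adj u v → cbp G c u ≠ cbp G c v

/-- Edges of the clause gadget: vertices 0,1,2 are z1,z2,z3; 3,...,16 are u1,...,u14;
17,18,19 are the pendants ℓ4, ℓ7, ℓ10 (so u4 = 6, u7 = 9, u10 = 12). -/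
def clauseRel (p q : Fin 20) : Prop :=
  (p.val, q.val) ∈ [(0,1),(1,2),(0,2),(0,3),(3,4),(4,5),(5,6),(6,7),(7,8),(8,9),(9,10),
    (10,11),(11,12),(12,13),(13,14),(14,15),(15,16),(16,3),(6,17),(9,18),(12,19)]

instance : DecidableRel clauseRel := fun p q => by unfold clauseRel; infer_instance

/-- The clause gadget `L`. -/
def clauseGadget : SimpleGraph (Fin 20) where
  Adj p q := p ≠ q ∧ (clauseRel p q ∨ clauseRel q p)
  symm := ⟨fun p q h => ⟨h.1.symm, h.2.symm⟩⟩
  loopless := ⟨fun p h => h.1 rfl⟩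

instance : DecidableRel clauseGadget.Adj := fun p q =>
  inferInstanceAs (Decidable (p ≠ q ∧ (clauseRel p q ∨ clauseRel q p)))

lemma cbp_deg2 {G : SimpleGraph (Fin 20)} [DecidableRel G.Adj] (c : Sym2 (Fin 20) → Fin 2)
    (v a b : Fin 20) (hab : a ≠ b) (h : G.neighborFinset v = {a, b}) :
    cbp G c v = if c s(v,a) = c s(v,b) then {2} else {1,1} := by
  unfold cbp
  rw [h]
  have huniv : (Finset.univ : Finset (Fin 2)).val = {0, 1} := by decide
  rw [huniv]
  simp only [Finset.filter_insert, Finset.filter_singleton]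
  generalize c s(v,a) = x
  generalize c s(v,b) = y
  fin_cases x <;> fin_cases y <;> simp [hab] <;> decide

lemma cbp_deg3 {G : SimpleGraph (Fin 20)} [DecidableRel G.Adj] (c : Sym2 (Fin 20) → Fin 2)
    (v a b d : Fin 20) (hab : a ≠ b) (had : a ≠ d) (hbd : b ≠ d)
    (h : G.neighborFinset v = {a, b, d}) :
    cbp G c v = if c s(v,a) = c s(v,b) ∧ c s(v,b) = c s(v,d) then {3} else {2,1} := by
  unfold cbp
  rw [h]
  have huniv : (Finset.univ : Finset (Fin 2)).val = {0, 1} := by decide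
  rw [huniv]
  simp only [Finset.filter_insert, Finset.filter_singleton]
  generalize c s(v,a) = x
  generalize c s(v,b) = y
  generalize c s(v,d) = z
  fin_cases x <;> fin_cases y <;> fin_cases z <;>
    simp [hab, had, hbd, Finset.card_insert_of_notMem] <;> decide

lemma not_iff_of_ite_ne {m n : Multiset ℕ} {p q : Prop} [Decidable p] [Decidable q]
    (h : (if p then m else n) ≠ (if q then m else n)) : ¬(p ↔ q) := by
  by_cases hp : p <;> by_cases hq : q <;> simp [hp, hq] at h ⊢ <;> tauto

lemma of_ite_ne {m n : Multiset ℕ} {p : Prop} [Decidable p]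
    (h : (if p then m else n) ≠ n) : p := by
  by_cases hp : p <;> simp [hp] at h ⊢

theorem clause_gadget_one_true (c : Sym2 (Fin 20) → Fin 2) (hc : IsCBD clauseGadget c) :
    cbp clauseGadget c 6 = {2, 1} ∨ cbp clauseGadget c 9 = {2, 1} ∨
      cbp clauseGadget c 12 = {2, 1} := by
  by_contra hcon
  push_neg at hcon
  obtain ⟨m6, m9, m12⟩ := hcon
  -- compute cbp at each relevant vertex, with edges oriented canonically
  have h0 := cbp_deg3 (G := clauseGadget) c 0 1 2 3 (by decide) (by decide) (by decide) (by decide)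
  have h1 := cbp_deg2 (G := clauseGadget) c 1 0 2 (by decide) (by decide)
  have h2 := cbp_deg2 (G := clauseGadget) c 2 0 1 (by decide) (by decide)
  have h3 := cbp_deg3 (G := clauseGadget) c 3 0 4 16 (by decide) (by decide) (by decide) (by decide)
  have h4 := cbp_deg2 (G := clauseGadget) c 4 3 5 (by decide) (by decide)
  have h5 := cbp_deg2 (G := clauseGadget) c 5 4 6 (by decide) (by decide)
  have h6 := cbp_deg3 (G := clauseGadget) c 6 5 7 17 (by decide) (by decide) (by decide) (by decide)
  have h7 := cbp_deg2 (G := clauseGadget) c 7 6 8 (by decide) (by decide)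
  have h8 := cbp_deg2 (G := clauseGadget) c 8 7 9 (by decide) (by decide)
  have h9 := cbp_deg3 (G := clauseGadget) c 9 8 10 18 (by decide) (by decide) (by decide) (by decide)
  have h10 := cbp_deg2 (G := clauseGadget) c 10 9 11 (by decide) (by decide)
  have h11 := cbp_deg2 (G := clauseGadget) c 11 10 12 (by decide) (by decide)
  have h12 := cbp_deg3 (G := clauseGadget) c 12 11 13 19 (by decide) (by decide) (by decide) (by decide)
  have h13 := cbp_deg2 (G := clauseGadget) c 13 12 14 (by decide) (by decide)
  have h14 := cbp_deg2 (G := clauseGadget) c 14 13 15 (by decide) (by decide)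
  have h15 := cbp_deg2 (G := clauseGadget) c 15 14 16 (by decide) (by decide)
  have h16 := cbp_deg2 (G := clauseGadget) c 16 15 3 (by decide) (by decide)
  rw [show s((1:Fin 20),0) = s(0,1) from Sym2.eq_swap] at h1
  rw [show s((2:Fin 20),0) = s(0,2) from Sym2.eq_swap,
      show s((2:Fin 20),1) = s(1,2) from Sym2.eq_swap] at h2
  rw [show s((3:Fin 20),0) = s(0,3) from Sym2.eq_swap] at h3
  rw [show s((4:Fin 20),3) = s(3,4) from Sym2.eq_swap] at h4
  rw [show s((5:Fin 20),4) = s(4,5) from Sym2.eq_swap] at h5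
  rw [show s((6:Fin 20),5) = s(5,6) from Sym2.eq_swap] at h6
  rw [show s((7:Fin 20),6) = s(6,7) from Sym2.eq_swap] at h7
  rw [show s((8:Fin 20),7) = s(7,8) from Sym2.eq_swap] at h8
  rw [show s((9:Fin 20),8) = s(8,9) from Sym2.eq_swap] at h9
  rw [show s((10:Fin 20),9) = s(9,10) from Sym2.eq_swap] at h10
  rw [show s((11:Fin 20),10) = s(10,11) from Sym2.eq_swap] at h11
  rw [show s((12:Fin 20),11) = s(11,12) from Sym2.eq_swap] at h12
  rw [show s((13:Fin 20),12) = s(12,13) from Sym2.eq_swap] at h13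
  rw [show s((14:Fin 20),13) = s(13,14) from Sym2.eq_swap] at h14
  rw [show s((15:Fin 20),14) = s(14,15) from Sym2.eq_swap] at h15
  rw [show s((16:Fin 20),15) = s(15,16) from Sym2.eq_swap,
      show s((16:Fin 20),3) = s(3,16) from Sym2.eq_swap] at h16
  -- monochromatic conditions at 6, 9, 12
  rw [h6] at m6; rw [h9] at m9; rw [h12] at m12
  replace m6 := of_ite_ne m6
  replace m9 := of_ite_ne m9
  replace m12 := of_ite_ne m12
  -- adjacency constraints
  have A45 := hc 4 5 (by decide); rw [h4, h5] at A45
  replace A45 := not_iff_of_ite_ne A45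
  have A78 := hc 7 8 (by decide); rw [h7, h8] at A78
  replace A78 := not_iff_of_ite_ne A78
  have A1011 := hc 10 11 (by decide); rw [h10, h11] at A1011
  replace A1011 := not_iff_of_ite_ne A1011
  have A1314 := hc 13 14 (by decide); rw [h13, h14] at A1314
  replace A1314 := not_iff_of_ite_ne A1314
  have A1415 := hc 14 15 (by decide); rw [h14, h15] at A1415
  replace A1415 := not_iff_of_ite_ne A1415
  have A1516 := hc 15 16 (by decide); rw [h15, h16] at A1516
  replace A1516 := not_iff_of_ite_ne A1516
  have A03 := hc 0 3 (by decide); rw [h0, h3] at A03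
  replace A03 := not_iff_of_ite_ne A03
  have A12 := hc 1 2 (by decide); rw [h1, h2] at A12
  replace A12 := not_iff_of_ite_ne A12
  -- bounds for omega
  have b1 := (c s((0:Fin 20),1)).isLt
  have b2 := (c s((0:Fin 20),2)).isLt
  have b3 := (c s((0:Fin 20),3)).isLt
  have b4 := (c s((1:Fin 20),2)).isLt
  have b5 := (c s((3:Fin 20),4)).isLt
  have b6 := (c s((4:Fin 20),5)).isLt
  have b7 := (c s((5:Fin 20),6)).isLt
  have b8 := (c s((6:Fin 20),7)).isLt
  have b9 := (c s((7:Fin 20),8)).isLt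
  have b10 := (c s((8:Fin 20),9)).isLt
  have b11 := (c s((9:Fin 20),10)).isLt
  have b12 := (c s((10:Fin 20),11)).isLt
  have b13 := (c s((11:Fin 20),12)).isLt
  have b14 := (c s((12:Fin 20),13)).isLt
  have b15 := (c s((13:Fin 20),14)).isLt
  have b16 := (c s((14:Fin 20),15)).isLt
  have b17 := (c s((15:Fin 20),16)).isLt
  have b18 := (c s((3:Fin 20),16)).isLt
  have b19 := (c s((6:Fin 20),17)).isLt
  have b20 := (c s((9:Fin 20),18)).isLt
  have b21 := (c s((12:Fin 20),19)).isLt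
  simp only [Fin.ext_iff] at m6 m9 m12 A45 A78 A1011 A1314 A1415 A1516 A03 A12
  omega
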